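/- Define a circular ab-chain as an epistemic model on worlds 0,…,2n−1 (n ≥ 2) where 2i ∼_a 2i+1 and 2i ∼_b 2i−1 (indices modulo 2n), with no other nontrivial indistinguishabilities. If M is a circular ab-chain, then M ⊙ IS is a circular ab-chain on 6n worlds, where IS = {R^{ab}, R^{ba}, U} is the immediate-snapshot communication pattern for agents {a,b}. -/

import Mathlib

namespace Stmt7

/-- The two agents: `false` is agent `a`, `true` is agent `b`. -/
abbrev Agent := Bool

/-- The three communication graphs of the immediate snapshot pattern
`IS = {R^{ab}, R^{ba}, U}`. -/
inductive Pat : Type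
  | Rab | Rba | U

/-- `recv R c` is the set `Rc = {d | (d,c) ∈ R}` of agents whose message `c`
receives: `R^{ab}a = {a}`, `R^{ab}b = {a,b}`, `R^{ba}a = {a,b}`, `R^{ba}b = {b}`,
`Ua = Ub = {a,b}`. -/
def recv : Pat → Agent → Set Agent
  | Pat.Rab, false => {false}
  | Pat.Rab, true => Set.univ
  | Pat.Rba, false => Set.univ
  | Pat.Rba, true => {true}
  | Pat.U, _ => Set.univ

/-- The cyclic neighbour of world `k` for agent `c` in a circular `ab`-chain on
`2m` worlds: `2i ∼_a 2i+1` and `2i ∼_b 2i−1` (mod `2m`). -/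
noncomputable def partner (m : ℕ) (c : Agent) (k : ZMod (2 * m)) : ZMod (2 * m) :=
  if Even k.val ↔ c = false then k + 1 else k - 1

/-- The indistinguishability relation of a circular `ab`-chain on `2m` worlds. -/
noncomputable def chainRel (m : ℕ) (c : Agent) (u v : ZMod (2 * m)) : Prop :=
  v = u ∨ v = partner m c u ∨ u = partner m c v

/-- The relation of `M ⊙ IS`:
`(w,R) ∼̇_c (w',R')` iff `Rc = R'c` and `w ∼_{Rc} w'`. -/
noncomputable def updRel {α : Type} (sim : Agent → α → α → Prop) (c : Agent)
    (x y : α × Pat) : Prop :=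
  recv x.2 c = recv y.2 c ∧ ∀ d ∈ recv x.2 c, sim d x.1 y.1

/- ------------------------------------------------------------------ -/
/- Auxiliary development                                               -/
/- ------------------------------------------------------------------ -/

deriving instance DecidableEq for Pat

instance : Fintype Pat :=
  ⟨⟨↑[Pat.Rab, Pat.Rba, Pat.U], by decide⟩, fun x => by cases x <;> decide⟩

section Parity

variable {m : ℕ} [NeZero m]

lemma parity_cast (x : ZMod (2 * m)) :
    ((x.val : ℕ) : ZMod 2) = ZMod.castHom ⟨m, rfl⟩ (ZMod 2) x := by
  rw [ZMod.castHom_apply, ZMod.natCast_val]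

lemma even_val_iff (x : ZMod (2 * m)) : Even x.val ↔ ((x.val : ℕ) : ZMod 2) = 0 := by
  rw [ZMod.natCast_eq_zero_iff]
  simp [Nat.even_iff, Nat.dvd_iff_mod_eq_zero]

lemma parity_add_one (x : ZMod (2 * m)) :
    (((x + 1).val : ℕ) : ZMod 2) = ((x.val : ℕ) : ZMod 2) + 1 := by
  rw [parity_cast, parity_cast, map_add, map_one]

lemma parity_sub_one (x : ZMod (2 * m)) :
    (((x - 1).val : ℕ) : ZMod 2) = ((x.val : ℕ) : ZMod 2) + 1 := by
  rw [parity_cast, parity_cast, map_sub, map_one]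
  have h : (-1 : ZMod 2) = 1 := by decide
  rw [sub_eq_add_neg, h]

lemma even_add_one (x : ZMod (2 * m)) : Even ((x + 1).val) ↔ ¬ Even x.val := by
  rw [even_val_iff, even_val_iff, parity_add_one]
  have : ∀ p : ZMod 2, p + 1 = 0 ↔ ¬ p = 0 := by decide
  exact this _

lemma even_sub_one (x : ZMod (2 * m)) : Even ((x - 1).val) ↔ ¬ Even x.val := by
  rw [even_val_iff, even_val_iff, parity_sub_one]
  have : ∀ p : ZMod 2, p + 1 = 0 ↔ ¬ p = 0 := by decide
  exact this _

lemma even_sub_two (x : ZMod (2 * m)) : Even ((x - 2).val) ↔ Even x.val := by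
  rw [show x - 2 = x - 1 - 1 by ring, even_sub_one, even_sub_one, not_not]

end Parity

/-- Partner lemmas. -/
lemma partner_false_even {m : ℕ} {k : ZMod (2 * m)} (h : Even k.val) :
    partner m false k = k + 1 := by
  unfold partner; rw [if_pos (by simp [h])]

lemma partner_false_odd {m : ℕ} {k : ZMod (2 * m)} (h : ¬ Even k.val) :
    partner m false k = k - 1 := by
  unfold partner; rw [if_neg (by simp [h])]

lemma partner_true_even {m : ℕ} {k : ZMod (2 * m)} (h : Even k.val) :
    partner m true k = k - 1 := by
  unfold partner; rw [if_neg (by simp [h])]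

lemma partner_true_odd {m : ℕ} {k : ZMod (2 * m)} (h : ¬ Even k.val) :
    partner m true k = k + 1 := by
  unfold partner; rw [if_pos (by simp [h])]

/-- `2 ≠ 0` in `ZMod (2n)` when `n ≥ 2`. -/
lemma two_ne (n : ℕ) (hn : 2 ≤ n) : (2 : ZMod (2 * n)) ≠ 0 := by
  intro h
  have h2 : ((2 : ℕ) : ZMod (2 * n)) = 0 := by exact_mod_cast h
  rw [ZMod.natCast_eq_zero_iff] at h2
  have := Nat.le_of_dvd (by norm_num) h2
  omega

/-- Simultaneous `a`- and `b`-relatedness forces equality (`n ≥ 2`). -/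
lemma chain_both (n : ℕ) (hn : 2 ≤ n) (k k' : ZMod (2 * n))
    (h : ∀ d, chainRel n d k k') : k' = k := by
  haveI : NeZero n := ⟨by omega⟩
  have hf := h false
  have ht := h true
  have h2 := two_ne n hn
  unfold chainRel at hf ht
  rcases hf with rfl | h1 | h1
  · rfl
  · by_cases hk : Even k.val
    · rw [partner_false_even hk] at h1
      have hk' : ¬ Even k'.val := by rw [h1, even_add_one]; simp [hk]
      rcases ht with rfl | h2' | h2'
      · rfl
      · rw [partner_true_even hk] at h2'
        exact absurd (by linear_combination h2' - h1) h2
      · rw [partner_true_odd hk'] at h2'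
        exact absurd (by linear_combination -h1 - h2') h2
    · rw [partner_false_odd hk] at h1
      have hk' : Even k'.val := by rw [h1, even_sub_one]; simp [hk]
      rcases ht with rfl | h2' | h2'
      · rfl
      · rw [partner_true_odd hk] at h2'
        exact absurd (by linear_combination h1 - h2') h2
      · rw [partner_true_even hk'] at h2'
        exact absurd (by linear_combination h1 + h2') h2
  · by_cases hk' : Even k'.val
    · rw [partner_false_even hk'] at h1
      have hk : ¬ Even k.val := by rw [h1, even_add_one]; simp [hk']
      rcases ht with rfl | h2' | h2'
      · rfl
      · rw [partner_true_odd hk] at h2'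
        exact absurd (by linear_combination -h1 - h2') h2
      · rw [partner_true_even hk'] at h2'
        exact absurd (by linear_combination h2' - h1) h2
    · rw [partner_false_odd hk'] at h1
      have hk : Even k.val := by rw [h1, even_sub_one]; simp [hk']
      rcases ht with rfl | h2' | h2'
      · rfl
      · rw [partner_true_even hk] at h2'
        exact absurd (by linear_combination h1 + h2') h2
      · rw [partner_true_odd hk'] at h2'
        exact absurd (by linear_combination h1 - h2') h2

/-- The partner map of the updated model. -/
noncomputable def pp (n : ℕ) : Agent → ZMod (2 * n) × Pat → ZMod (2 * n) × Pat
  | false, (k, Pat.Rab) => (partner n false k, Pat.Rab)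
  | false, (k, Pat.Rba) => (k, Pat.U)
  | false, (k, Pat.U) => (k, Pat.Rba)
  | true, (k, Pat.Rba) => (partner n true k, Pat.Rba)
  | true, (k, Pat.Rab) => (k, Pat.U)
  | true, (k, Pat.U) => (k, Pat.Rab)

/-- Structural characterisation of `updRel` on a circular chain. -/
lemma updRel_iff (n : ℕ) (hn : 2 ≤ n) (c : Agent) (x y : ZMod (2 * n) × Pat) :
    updRel (chainRel n) c x y ↔ (y = x ∨ y = pp n c x ∨ x = pp n c y) := by
  obtain ⟨k, R⟩ := x
  obtain ⟨k', R'⟩ := y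
  have hsf : ({false} : Set Agent) ≠ Set.univ := by
    intro h
    have : (true : Agent) ∈ ({false} : Set Agent) := h ▸ Set.mem_univ _
    simp at this
  have hst : ({true} : Set Agent) ≠ Set.univ := by
    intro h
    have : (false : Agent) ∈ ({true} : Set Agent) := h ▸ Set.mem_univ _
    simp at this
  cases c <;> cases R <;> cases R'
  · -- false, Rab, Rab
    simp [updRel, recv, pp, Prod.ext_iff, chainRel]
  · -- false, Rab, Rba
    exact ⟨fun h => absurd h.1 hsf, by rintro (h | h | h) <;> simp [pp, Prod.ext_iff] at h⟩
  · -- false, Rab, U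
    exact ⟨fun h => absurd h.1 hsf, by rintro (h | h | h) <;> simp [pp, Prod.ext_iff] at h⟩
  · -- false, Rba, Rab
    exact ⟨fun h => absurd h.1 hsf.symm, by
      rintro (h | h | h) <;> simp [pp, Prod.ext_iff] at h⟩
  · -- false, Rba, Rba
    constructor
    · intro h
      have hkk : k' = k := chain_both n hn k k' (fun d => h.2 d (Set.mem_univ d))
      subst hkk; simp [pp]
    · rintro (h | h | h) <;> simp [pp, Prod.ext_iff] at h <;>
        exact ⟨rfl, fun d _ => Or.inl (by simp_all)⟩
  · -- false, Rba, U
    constructor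
    · intro h
      have hkk : k' = k := chain_both n hn k k' (fun d => h.2 d (Set.mem_univ d))
      subst hkk; simp [pp]
    · rintro (h | h | h) <;> simp [pp, Prod.ext_iff] at h <;>
        exact ⟨rfl, fun d _ => Or.inl (by simp_all)⟩
  · -- false, U, Rab
    exact ⟨fun h => absurd h.1 hsf.symm, by
      rintro (h | h | h) <;> simp [pp, Prod.ext_iff] at h⟩
  · -- false, U, Rba
    constructor
    · intro h
      have hkk : k' = k := chain_both n hn k k' (fun d => h.2 d (Set.mem_univ d))
      subst hkk; simp [pp]
    · rintro (h | h | h) <;> simp [pp, Prod.ext_iff] at h <;>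
        exact ⟨rfl, fun d _ => Or.inl (by simp_all)⟩
  · -- false, U, U
    constructor
    · intro h
      have hkk : k' = k := chain_both n hn k k' (fun d => h.2 d (Set.mem_univ d))
      subst hkk; simp [pp]
    · rintro (h | h | h) <;> simp [pp, Prod.ext_iff] at h <;>
        exact ⟨rfl, fun d _ => Or.inl (by simp_all)⟩
  · -- true, Rab, Rab
    constructor
    · intro h
      have hkk : k' = k := chain_both n hn k k' (fun d => h.2 d (Set.mem_univ d))
      subst hkk; simp [pp]
    · rintro (h | h | h) <;> simp [pp, Prod.ext_iff] at h <;>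
        exact ⟨rfl, fun d _ => Or.inl (by simp_all)⟩
  · -- true, Rab, Rba
    exact ⟨fun h => absurd h.1.symm hst, by
      rintro (h | h | h) <;> simp [pp, Prod.ext_iff] at h⟩
  · -- true, Rab, U
    constructor
    · intro h
      have hkk : k' = k := chain_both n hn k k' (fun d => h.2 d (Set.mem_univ d))
      subst hkk; simp [pp]
    · rintro (h | h | h) <;> simp [pp, Prod.ext_iff] at h <;>
        exact ⟨rfl, fun d _ => Or.inl (by simp_all)⟩
  · -- true, Rba, Rab
    exact ⟨fun h => absurd h.1 hst, by rintro (h | h | h) <;> simp [pp, Prod.ext_iff] at h⟩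
  · -- true, Rba, Rba
    simp [updRel, recv, pp, Prod.ext_iff, chainRel]
  · -- true, Rba, U
    exact ⟨fun h => absurd h.1 hst, by rintro (h | h | h) <;> simp [pp, Prod.ext_iff] at h⟩
  · -- true, U, Rab
    constructor
    · intro h
      have hkk : k' = k := chain_both n hn k k' (fun d => h.2 d (Set.mem_univ d))
      subst hkk; simp [pp]
    · rintro (h | h | h) <;> simp [pp, Prod.ext_iff] at h <;>
        exact ⟨rfl, fun d _ => Or.inl (by simp_all)⟩
  · -- true, U, Rba
    exact ⟨fun h => absurd h.1.symm hst, by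
      rintro (h | h | h) <;> simp [pp, Prod.ext_iff] at h⟩
  · -- true, U, U
    constructor
    · intro h
      have hkk : k' = k := chain_both n hn k k' (fun d => h.2 d (Set.mem_univ d))
      subst hkk; simp [pp]
    · rintro (h | h | h) <;> simp [pp, Prod.ext_iff] at h <;>
        exact ⟨rfl, fun d _ => Or.inl (by simp_all)⟩

/-- The embedding of worlds, multiplied by 3. -/
noncomputable def emb (n : ℕ) (k : ZMod (2 * n)) : ZMod (2 * (3 * n)) :=
  ((k.val : ℕ) : ZMod (2 * (3 * n))) * 3

section Emb

variable (n : ℕ) [NeZero n]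

lemma cast_mod_mul_three (a : ℕ) :
    (((a % (2 * n) : ℕ)) : ZMod (2 * (3 * n))) * 3 = ((a : ℕ) : ZMod (2 * (3 * n))) * 3 := by
  have h : ((a : ℕ) : ZMod (2 * (3 * n)))
      = ((a % (2 * n) : ℕ) : ZMod (2 * (3 * n)))
        + ((2 * n : ℕ) : ZMod (2 * (3 * n))) * ((a / (2 * n) : ℕ) : ZMod (2 * (3 * n))) := by
    rw [← Nat.cast_mul, ← Nat.cast_add, Nat.mod_add_div]
  have h0 : ((2 * n : ℕ) : ZMod (2 * (3 * n))) * 3 = 0 := by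
    have e : ((2 * n : ℕ) : ZMod (2 * (3 * n))) * 3
        = ((2 * (3 * n) : ℕ) : ZMod (2 * (3 * n))) := by push_cast; ring
    rw [e, ZMod.natCast_self]
  rw [h]
  linear_combination -((a / (2 * n) : ℕ) : ZMod (2 * (3 * n))) * h0

lemma emb_add_one (k : ZMod (2 * n)) : emb n (k + 1) = emb n k + 3 := by
  have hpos := NeZero.pos n
  have h1 : (1 : ZMod (2 * n)).val = 1 := ZMod.val_one'' (by omega)
  unfold emb
  rw [ZMod.val_add, h1, cast_mod_mul_three]
  push_cast; ring

lemma emb_sub_one (k : ZMod (2 * n)) : emb n (k - 1) = emb n k - 3 := by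
  have h := emb_add_one n (k - 1)
  rw [sub_add_cancel] at h
  rw [h]; ring

lemma parity_emb (k : ZMod (2 * n)) :
    (((emb n k).val : ℕ) : ZMod 2) = ((k.val : ℕ) : ZMod 2) := by
  rw [parity_cast (m := 3 * n) (emb n k)]
  unfold emb
  rw [show (3 : ZMod (2 * (3 * n))) = ((3 : ℕ) : ZMod (2 * (3 * n))) by norm_cast]
  rw [map_mul, map_natCast, map_natCast]
  rw [show ((3 : ℕ) : ZMod 2) = 1 by decide, mul_one]

lemma even_emb (k : ZMod (2 * n)) : Even ((emb n k).val) ↔ Even k.val := by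
  rw [even_val_iff (m := 3 * n), even_val_iff (m := n), parity_emb]

end Emb

/-- The chain structure map. -/
noncomputable def ee (n : ℕ) : ZMod (2 * n) × Pat → ZMod (2 * (3 * n))
  | (k, Pat.Rab) => if Even k.val then emb n k else emb n k - 2
  | (k, Pat.U) => emb n k - 1
  | (k, Pat.Rba) => if Even k.val then emb n k - 2 else emb n k

/-- `ee` intertwines the partner maps. -/
lemma ee_pp (n : ℕ) [NeZero n] (c : Agent) (x : ZMod (2 * n) × Pat) :
    ee n (pp n c x) = partner (3 * n) c (ee n x) := by
  obtain ⟨k, R⟩ := x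
  cases c <;> cases R
  · -- false, Rab
    by_cases hk : Even k.val
    · have h1 : ¬ Even ((k + 1).val) := by rw [even_add_one]; simp [hk]
      simp only [pp, ee, partner_false_even hk, if_pos hk, if_neg h1]
      rw [emb_add_one, partner_false_even ((even_emb n k).mpr hk)]
      try ring
    · have h1 : Even ((k - 1).val) := by rw [even_sub_one]; simp [hk]
      have h2 : ¬ Even ((emb n k - 2).val) := by rw [even_sub_two]; simp [even_emb, hk]
      simp only [pp, ee, partner_false_odd hk, if_neg hk, if_pos h1]
      rw [emb_sub_one, partner_false_odd h2]
      try ring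
  · -- false, Rba
    by_cases hk : Even k.val
    · have h2 : Even ((emb n k - 2).val) := by rw [even_sub_two]; simp [even_emb, hk]
      simp only [pp, ee, if_pos hk]
      rw [partner_false_even h2]
      try ring
    · have h2 : ¬ Even ((emb n k).val) := by simp [even_emb, hk]
      simp only [pp, ee, if_neg hk]
      rw [partner_false_odd h2]
      try ring
  · -- false, U
    by_cases hk : Even k.val
    · have h2 : ¬ Even ((emb n k - 1).val) := by rw [even_sub_one]; simp [even_emb, hk]
      simp only [pp, ee, if_pos hk]
      rw [partner_false_odd h2]
      try ring
    · have h2 : Even ((emb n k - 1).val) := by rw [even_sub_one]; simp [even_emb, hk]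
      simp only [pp, ee, if_neg hk]
      rw [partner_false_even h2]
      try ring
  · -- true, Rab
    by_cases hk : Even k.val
    · have h2 : Even ((emb n k).val) := by simp [even_emb, hk]
      simp only [pp, ee, if_pos hk]
      rw [partner_true_even h2]
    · have h2 : ¬ Even ((emb n k - 2).val) := by rw [even_sub_two]; simp [even_emb, hk]
      simp only [pp, ee, if_neg hk]
      rw [partner_true_odd h2]
      try ring
  · -- true, Rba
    by_cases hk : Even k.val
    · have h1 : ¬ Even ((k - 1).val) := by rw [even_sub_one]; simp [hk]
      have h2 : Even ((emb n k - 2).val) := by rw [even_sub_two]; simp [even_emb, hk]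
      simp only [pp, ee, partner_true_even hk, if_pos hk, if_neg h1]
      rw [emb_sub_one, partner_true_even h2]
      try ring
    · have h1 : Even ((k + 1).val) := by rw [even_add_one]; simp [hk]
      have h2 : ¬ Even ((emb n k).val) := by simp [even_emb, hk]
      simp only [pp, ee, partner_true_odd hk, if_neg hk, if_pos h1]
      rw [emb_add_one, partner_true_odd h2]
      try ring
  · -- true, U
    by_cases hk : Even k.val
    · have h2 : ¬ Even ((emb n k - 1).val) := by rw [even_sub_one]; simp [even_emb, hk]
      simp only [pp, ee, if_pos hk]
      rw [partner_true_odd h2]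
      try ring
    · have h2 : Even ((emb n k - 1).val) := by rw [even_sub_one]; simp [even_emb, hk]
      simp only [pp, ee, if_neg hk]
      rw [partner_true_even h2]
      try ring

/-- Which `Pat` a residue mod 6 corresponds to. -/
def patOf : ℕ → Pat
  | 0 => Pat.Rab | 1 => Pat.Rab | 2 => Pat.U | 3 => Pat.Rba | 4 => Pat.Rba | _ => Pat.U

/-- Left inverse of `ee`. -/
noncomputable def gg (n : ℕ) (j : ZMod (2 * (3 * n))) : ZMod (2 * n) × Pat :=
  ((((j.val + 2) / 3 : ℕ) : ZMod (2 * n)), patOf (j.val % 6))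

lemma gg_ee (n : ℕ) (hn : 1 ≤ n) : ∀ x, gg n (ee n x) = x := by
  haveI : NeZero n := ⟨by omega⟩
  rintro ⟨k, R⟩
  have hv : k.val < 2 * n := ZMod.val_lt k
  have hk : ((k.val : ℕ) : ZMod (2 * n)) = k := ZMod.natCast_zmod_val k
  cases R
  · -- Rab
    by_cases he : Even k.val
    · have hm2 : k.val % 2 = 0 := Nat.even_iff.mp he
      have e1 : ee n (k, Pat.Rab) = ((3 * k.val : ℕ) : ZMod (2 * (3 * n))) := by
        simp only [ee, if_pos he, emb]; push_cast; ring
      have e2 : (ee n (k, Pat.Rab)).val = 3 * k.val := by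
        rw [e1, ZMod.val_cast_of_lt (by omega)]
      have h1 : (3 * k.val + 2) / 3 = k.val := by omega
      have h2 : (3 * k.val) % 6 = 0 := by omega
      simp only [gg, e2, h1, h2, hk, patOf]
    · have hm2 : k.val % 2 = 1 := Nat.not_even_iff.mp he
      have e1 : ee n (k, Pat.Rab) = ((3 * k.val - 2 : ℕ) : ZMod (2 * (3 * n))) := by
        simp only [ee, if_neg he, emb]
        rw [Nat.cast_sub (by omega)]
        push_cast; ring
      have e2 : (ee n (k, Pat.Rab)).val = 3 * k.val - 2 := by
        rw [e1, ZMod.val_cast_of_lt (by omega)]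
      have h1 : (3 * k.val - 2 + 2) / 3 = k.val := by omega
      have h2 : (3 * k.val - 2) % 6 = 1 := by omega
      simp only [gg, e2, h1, h2, hk, patOf]
  · -- Rba
    by_cases he : Even k.val
    · have hm2 : k.val % 2 = 0 := Nat.even_iff.mp he
      rcases Nat.eq_zero_or_pos k.val with hz | hpos
      · have hk0 : k = 0 := (ZMod.val_eq_zero k).mp hz
        have e1 : ee n (k, Pat.Rba) = ((2 * (3 * n) - 2 : ℕ) : ZMod (2 * (3 * n))) := by
          show (if Even k.val then emb n k - 2 else emb n k) = _
          rw [if_pos he]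
          unfold emb
          rw [hz, Nat.cast_sub (by omega), ZMod.natCast_self]
          push_cast; ring
        have e2 : (ee n (k, Pat.Rba)).val = 2 * (3 * n) - 2 := by
          rw [e1, ZMod.val_cast_of_lt (by omega)]
        have h1 : (2 * (3 * n) - 2 + 2) / 3 = 2 * n := by omega
        have h2 : (2 * (3 * n) - 2) % 6 = 4 := by omega
        simp only [gg, e2, h1, h2, patOf]
        rw [ZMod.natCast_self, hk0]
      · have e1 : ee n (k, Pat.Rba) = ((3 * k.val - 2 : ℕ) : ZMod (2 * (3 * n))) := by
          simp only [ee, if_pos he, emb]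
          rw [Nat.cast_sub (by omega)]
          push_cast; ring
        have e2 : (ee n (k, Pat.Rba)).val = 3 * k.val - 2 := by
          rw [e1, ZMod.val_cast_of_lt (by omega)]
        have h1 : (3 * k.val - 2 + 2) / 3 = k.val := by omega
        have h2 : (3 * k.val - 2) % 6 = 4 := by omega
        simp only [gg, e2, h1, h2, hk, patOf]
    · have hm2 : k.val % 2 = 1 := Nat.not_even_iff.mp he
      have e1 : ee n (k, Pat.Rba) = ((3 * k.val : ℕ) : ZMod (2 * (3 * n))) := by
        simp only [ee, if_neg he, emb]; push_cast; ring
      have e2 : (ee n (k, Pat.Rba)).val = 3 * k.val := by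
        rw [e1, ZMod.val_cast_of_lt (by omega)]
      have h1 : (3 * k.val + 2) / 3 = k.val := by omega
      have h2 : (3 * k.val) % 6 = 3 := by omega
      simp only [gg, e2, h1, h2, hk, patOf]
  · -- U
    rcases Nat.eq_zero_or_pos k.val with hz | hpos
    · have hk0 : k = 0 := (ZMod.val_eq_zero k).mp hz
      have e1 : ee n (k, Pat.U) = ((2 * (3 * n) - 1 : ℕ) : ZMod (2 * (3 * n))) := by
        show emb n k - 1 = _
        unfold emb
        rw [hz, Nat.cast_sub (by omega), ZMod.natCast_self]
        push_cast; ring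
      have e2 : (ee n (k, Pat.U)).val = 2 * (3 * n) - 1 := by
        rw [e1, ZMod.val_cast_of_lt (by omega)]
      have h1 : (2 * (3 * n) - 1 + 2) / 3 = 2 * n := by omega
      have h2 : (2 * (3 * n) - 1) % 6 = 5 := by omega
      simp only [gg, e2, h1, h2, patOf]
      rw [ZMod.natCast_self, hk0]
    · have e1 : ee n (k, Pat.U) = ((3 * k.val - 1 : ℕ) : ZMod (2 * (3 * n))) := by
        simp only [ee, emb]
        rw [Nat.cast_sub (by omega)]
        push_cast; ring
      have e2 : (ee n (k, Pat.U)).val = 3 * k.val - 1 := by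
        rw [e1, ZMod.val_cast_of_lt (by omega)]
      have h1 : (3 * k.val - 1 + 2) / 3 = k.val := by omega
      have h2 : (3 * k.val - 1) % 6 = 2 ∨ (3 * k.val - 1) % 6 = 5 := by omega
      rcases h2 with h2 | h2 <;> simp only [gg, e2, h1, h2, hk, patOf]

/-- If `M` is a circular `ab`-chain on `2n` worlds (`n ≥ 2`), then `M ⊙ IS` is
again a circular `ab`-chain, on `6n` worlds. -/
theorem chain_update_is_chain (n : ℕ) (hn : 2 ≤ n) :
    ∃ e : (ZMod (2 * n) × Pat) ≃ ZMod (2 * (3 * n)),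
      ∀ (c : Agent) (x y : ZMod (2 * n) × Pat),
        updRel (chainRel n) c x y ↔ chainRel (3 * n) c (e x) (e y) := by
  haveI : NeZero n := ⟨by omega⟩
  have hinj : Function.Injective (ee n) :=
    Function.LeftInverse.injective (g := gg n) (gg_ee n (by omega))
  have hbij : Function.Bijective (ee n) := by
    rw [Fintype.bijective_iff_injective_and_card]
    refine ⟨hinj, ?_⟩
    rw [Fintype.card_prod, ZMod.card, ZMod.card]
    have : Fintype.card Pat = 3 := rfl
    rw [this]; ring
  refine ⟨Equiv.ofBijective _ hbij, ?_⟩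
  intro c x y
  rw [updRel_iff n hn]
  show _ ↔ chainRel (3 * n) c (ee n x) (ee n y)
  unfold chainRel
  rw [← ee_pp n c x, ← ee_pp n c y]
  simp only [hinj.eq_iff]

end Stmt7
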